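/- Let μ ∈ (0, 1] and let (φ_k)_{k≥0} be the real sequence defined by φ_0 ∈ (0, π) and the recursion φ_{k+1} = arctan(μ·tan(φ_k/2)). Then φ_k > 0 for all k, φ_k → 0 as k → ∞, and the convergence is Q-linear with rate μ/2, i.e., lim_{k→∞} φ_{k+1}/φ_k = μ/2. -/

import Mathlib

open Real Filter

lemma uhlig_aux_deriv (μ : ℝ) :
    HasDerivAt (fun x : ℝ => Real.arctan (μ * Real.tan (x / 2))) (μ / 2) 0 := by
  have h1 : HasDerivAt (fun x : ℝ => x / 2) (1 / 2) 0 := (hasDerivAt_id 0).div_const 2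
  have h2 : HasDerivAt Real.tan (1 / Real.cos ((0:ℝ)/2) ^ 2) ((0:ℝ)/2) :=
    Real.hasDerivAt_tan (by norm_num)
  have h3 : HasDerivAt (fun x : ℝ => Real.tan (x / 2)) ((1 / Real.cos ((0:ℝ)/2) ^ 2) * (1 / 2)) 0 :=
    HasDerivAt.comp (h := fun x : ℝ => x / 2) 0 h2 h1
  have h4 : HasDerivAt (fun x : ℝ => μ * Real.tan (x / 2))
      (μ * ((1 / Real.cos ((0:ℝ)/2) ^ 2) * (1 / 2))) 0 := h3.const_mul μ
  have h5 : HasDerivAt Real.arctan (1 / (1 + (μ * Real.tan (0 / 2 : ℝ)) ^ 2))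
      (μ * Real.tan (0 / 2 : ℝ)) := Real.hasDerivAt_arctan _
  have h6 : HasDerivAt (fun x : ℝ => Real.arctan (μ * Real.tan (x / 2)))
      (1 / (1 + (μ * Real.tan (0 / 2 : ℝ)) ^ 2) * (μ * ((1 / Real.cos ((0:ℝ)/2) ^ 2) * (1 / 2)))) 0 := by
    have := h5.comp 0 h4; exact this
  convert h6 using 1
  simp
  ring

/-- Theorem 4.6. The angles produced by Uhlig's cutting procedure,
`φ_{k+1} = arctan(μ·tan(φ_k/2))` with `φ_0 ∈ (0, π)`, stay positive and converge to zero
Q-linearly with rate `μ/2`. -/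
theorem uhlig_angle_convergence (μ : ℝ) (hμ1 : 0 < μ) (hμ2 : μ ≤ 1)
    (φ : ℕ → ℝ) (h0 : 0 < φ 0) (h0' : φ 0 < Real.pi)
    (hrec : ∀ k, φ (k + 1) = Real.arctan (μ * Real.tan (φ k / 2))) :
    (∀ k, 0 < φ k) ∧
    Filter.Tendsto φ Filter.atTop (nhds 0) ∧
    Filter.Tendsto (fun k => φ (k + 1) / φ k) Filter.atTop (nhds (μ / 2)) := by
  -- positivity and upper bound by π
  have hbd : ∀ k, 0 < φ k ∧ φ k < Real.pi := by
    intro k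
    induction k with
    | zero => exact ⟨h0, h0'⟩
    | succ n ih =>
      obtain ⟨hp, hπ⟩ := ih
      have half1 : 0 < φ n / 2 := by linarith
      have half2 : φ n / 2 < Real.pi / 2 := by linarith
      have htan : 0 < Real.tan (φ n / 2) := Real.tan_pos_of_pos_of_lt_pi_div_two half1 half2
      constructor
      · rw [hrec]
        have : Real.arctan 0 < Real.arctan (μ * Real.tan (φ n / 2)) :=
          Real.arctan_strictMono (by positivity)
        simpa using this
      · rw [hrec]
        exact lt_trans (Real.arctan_lt_pi_div_two _) (by linarith [Real.pi_pos])
  have hpos : ∀ k, 0 < φ k := fun k => (hbd k).1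
  -- halving bound
  have hhalf : ∀ k, φ (k + 1) ≤ φ k / 2 := by
    intro k
    obtain ⟨hp, hπ⟩ := hbd k
    have half1 : 0 < φ k / 2 := by linarith
    have half2 : φ k / 2 < Real.pi / 2 := by linarith
    rw [hrec]
    calc Real.arctan (μ * Real.tan (φ k / 2)) ≤ Real.arctan (Real.tan (φ k / 2)) := by
          exact Real.arctan_strictMono.monotone
            (by nlinarith [Real.tan_pos_of_pos_of_lt_pi_div_two half1 half2])
      _ = φ k / 2 := Real.arctan_tan (by linarith [Real.pi_pos]) half2
  have hgeo : ∀ k, φ k ≤ φ 0 / 2 ^ k := by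
    intro k
    induction k with
    | zero => simp
    | succ n ih =>
      calc φ (n + 1) ≤ φ n / 2 := hhalf n
        _ ≤ (φ 0 / 2 ^ n) / 2 := by linarith
        _ = φ 0 / 2 ^ (n + 1) := by ring
  have htend : Tendsto φ atTop (nhds 0) := by
    apply squeeze_zero (fun k => (hpos k).le) hgeo
    have : Tendsto (fun k : ℕ => φ 0 * (1 / 2 : ℝ) ^ k) atTop (nhds 0) := by
      simpa using (tendsto_pow_atTop_nhds_zero_of_lt_one (by norm_num)
        (by norm_num : (1/2:ℝ) < 1)).const_mul (φ 0)
    convert this using 2 with k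
    rw [div_pow]
    ring
  refine ⟨hpos, htend, ?_⟩
  -- ratio limit via derivative at 0
  have hderiv := uhlig_aux_deriv μ
  have hslope := hasDerivAt_iff_tendsto_slope.mp hderiv
  have htend' : Tendsto φ atTop (nhdsWithin 0 {(0:ℝ)}ᶜ) := by
    apply tendsto_nhdsWithin_of_tendsto_nhds_of_eventually_within _ htend
    exact Eventually.of_forall fun k => (hpos k).ne'
  have := hslope.comp htend'
  convert this using 2 with k
  have hf0 : Real.arctan (μ * Real.tan ((0:ℝ) / 2)) = 0 := by simp
  simp only [Function.comp_apply, slope_def_field, hrec k, hf0]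
  simp
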